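/- Let H ∈ SDC(N,M) be a semi-direct complement of N in M ⋊ N ⊆ M ⋊ G whose class is Q-invariant. Then there exists a semi-direct complement H̃ ∈ SDC(G,M) with H̃ ∩ (M ⋊ N) = H if and only if the extension 0 → M^N → N_{M⋊G}(H)/H → Q → 1 splits. -/

import Mathlib

/-- Let `H` be a semi-direct complement of `N` in `M ⋊ N ⊆ M ⋊ G` whose class
is `Q`-invariant (every `(M ⋊ G)`-conjugate of `H` is `M`-conjugate to `H`). Then `H` extends
to a semi-direct complement `H̃ ∈ SDC(G,M)` with `H̃ ∩ (M ⋊ N) = H` iff the extension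
`0 → M^N → N_{M⋊G}(H)/H → Q → 1` splits (expressed via the existence of a subgroup `K` with
`H ≤ K ≤ N_{M⋊G}(H)` mapping onto `Q` with kernel exactly `H`). -/
theorem extendable_iff_splits (M G : Type*) [CommGroup M] [Group G] (φ : G →* MulAut M)
    (N : Subgroup G) (hN : N.Normal)
    (H : Subgroup (M ⋊[φ] G))
    (hHN : ∀ x ∈ H, SemidirectProduct.right x ∈ N)
    (hsur : ∀ n ∈ N, ∃ x ∈ H, SemidirectProduct.right x = n)
    (hinj : ∀ x ∈ H, ∀ y ∈ H, SemidirectProduct.right x = SemidirectProduct.right y → x = y)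
    (hQ : ∀ a : M ⋊[φ] G, ∃ m : M,
      Subgroup.map (MulAut.conj a).toMonoidHom H
        = Subgroup.map (MulAut.conj (SemidirectProduct.inl m)).toMonoidHom H) :
    (∃ Ht : Subgroup (M ⋊[φ] G),
        (∀ g : G, ∃! x : M ⋊[φ] G, x ∈ Ht ∧ SemidirectProduct.right x = g) ∧
        Ht ⊓ Subgroup.comap (SemidirectProduct.rightHom : M ⋊[φ] G →* G) N = H) ↔
    (∃ K : Subgroup (M ⋊[φ] G),
        K ≤ Subgroup.normalizer (H : Set (M ⋊[φ] G)) ∧ H ≤ K ∧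
        (∀ g : G, ∃ x ∈ K, g⁻¹ * SemidirectProduct.right x ∈ N) ∧
        (∀ x ∈ K, SemidirectProduct.right x ∈ N → x ∈ H)) := by
  have hP : (Subgroup.comap (SemidirectProduct.rightHom : M ⋊[φ] G →* G) N).Normal :=
    hN.comap _
  constructor
  · rintro ⟨Ht, huniq, hint⟩
    refine ⟨Ht, ?_, ?_, ?_, ?_⟩
    · intro x hx
      rw [Subgroup.mem_normalizer_iff]
      intro h
      constructor
      · intro hh
        rw [← hint] at hh ⊢
        obtain ⟨h1, h2⟩ := hh
        refine ⟨Ht.mul_mem (Ht.mul_mem hx h1) (Ht.inv_mem hx), ?_⟩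
        simpa using hP.conj_mem h h2 x
      · intro hh
        rw [← hint] at hh ⊢
        obtain ⟨h1, h2⟩ := hh
        constructor
        · have := Ht.mul_mem (Ht.mul_mem (Ht.inv_mem hx) h1) hx
          simpa [mul_assoc] using this
        · have := hP.conj_mem _ h2 x⁻¹
          simpa [mul_assoc] using this
    · rw [← hint]; exact inf_le_left
    · intro g
      obtain ⟨x, ⟨hx, hrx⟩, -⟩ := huniq g
      exact ⟨x, hx, by rw [hrx, inv_mul_cancel]; exact N.one_mem⟩
    · intro x hx hxN
      rw [← hint]
      exact ⟨hx, hxN⟩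
  · rintro ⟨K, -, hHK, hKsur, hKker⟩
    refine ⟨K, ?_, ?_⟩
    · intro g
      obtain ⟨x, hxK, hn⟩ := hKsur g
      obtain ⟨h, hh, hrh⟩ := hsur _ hn
      have hmem : x * h⁻¹ ∈ K := K.mul_mem hxK (K.inv_mem (hHK hh))
      have hr : SemidirectProduct.right (x * h⁻¹) = g := by
        simp [hrh]
      refine ⟨x * h⁻¹, ⟨hmem, hr⟩, ?_⟩
      rintro y ⟨hyK, hyg⟩
      have hk : y * (x * h⁻¹)⁻¹ ∈ K := K.mul_mem hyK (K.inv_mem hmem)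
      have hr1 : SemidirectProduct.right (y * (x * h⁻¹)⁻¹) = 1 := by
        simp [hyg, hrh, mul_assoc]
      have hH1 : y * (x * h⁻¹)⁻¹ ∈ H := hKker _ hk (by rw [hr1]; exact N.one_mem)
      have := hinj _ hH1 1 H.one_mem (by simpa using hr1)
      exact mul_inv_eq_one.mp this
    · ext x
      simp only [Subgroup.mem_inf, Subgroup.mem_comap, SemidirectProduct.rightHom_eq_right]
      exact ⟨fun ⟨h1, h2⟩ => hKker x h1 h2, fun h => ⟨hHK h, hHN x h⟩⟩
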